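/- arXiv:2604.27732 — 3 statements merged into one kernel-verified Lean document; each statement's English description precedes it below -/
import Mathlib

section
/- Let I = J+1, λ ∈ [0,1], let C_{i,I−i} > 0 and π_i > 0 be fixed positive reals for 1 ≤ i ≤ I. For a vector of positive reals f = (f_0,…,f_{J−1}), set β_j(f) = ∏_{k=j}^{J−1} f_k^{−1} (so β_J(f) = 1), and define F(f) = Σ_{i=1}^I Ĉ^GCC_{i,J}(λ; f), the total GCC predictor computed from the pattern β(f). Then for every t ∈ {0,…,J−1} and every positive f, F is partially differentiable in f_t and satisfies f_t · ∂F/∂f_t (f) = Σ_{i=I−t}^{I} β_{I−i}(f) κ̂_i^GCC(λ; f) π_i + Σ_{i=1}^{I} (1 − β_{I−i}(f)) κ̂_i^GCC(λ; f) π_i · ( Σ_{k=I−t}^{I} β_{I−k}(f) π_k λ^{|i−k|} / Σ_{k=1}^{I} β_{I−k}(f) π_k λ^{|i−k|} ); equivalently, the logarithmic sensitivity q_t(λ) = ∂_{log f_t} log F(f) equals this expression divided by F(f). -/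
open Finset

/-- Development pattern induced by chain-ladder factors: β_j(f) = ∏_{k=j}^{J-1} f_k⁻¹. -/
noncomputable def betaCL (J : ℕ) (f : ℕ → ℝ) (j : ℕ) : ℝ :=
  ∏ k ∈ Ico j J, (f k)⁻¹

/-- GCC claims-ratio estimator computed from the pattern β(f); here `C l` denotes the
diagonal observation C_{l,I-l}. -/
noncomputable def kappaGCCf (I J : ℕ) (C π : ℕ → ℝ) (lam : ℝ) (f : ℕ → ℝ) (i : ℕ) : ℝ :=
  (∑ l ∈ Icc 1 I, C l * lam ^ Nat.dist i l) /
    (∑ k ∈ Icc 1 I, betaCL J f (I - k) * π k * lam ^ Nat.dist i k)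

/-- Total GCC predictor F(f) = Σᵢ Ĉᵢ^GCC(λ; f). -/
noncomputable def totalGCC (I J : ℕ) (C π : ℕ → ℝ) (lam : ℝ) (f : ℕ → ℝ) : ℝ :=
  ∑ i ∈ Icc 1 I,
    (C i + (1 - betaCL J f (I - i)) * kappaGCCf I J C π lam f i * π i)

/-! Auxiliary abbreviations. -/

/-- Numerator of the GCC claims-ratio estimator. -/
noncomputable def Nn (I : ℕ) (C : ℕ → ℝ) (lam : ℝ) (i : ℕ) : ℝ :=
  ∑ l ∈ Icc 1 I, C l * lam ^ Nat.dist i l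

/-- Denominator of the GCC claims-ratio estimator. -/
noncomputable def Sd (I J : ℕ) (π : ℕ → ℝ) (lam : ℝ) (f : ℕ → ℝ) (i : ℕ) : ℝ :=
  ∑ k ∈ Icc 1 I, betaCL J f (I - k) * π k * lam ^ Nat.dist i k

/-- The part of the denominator depending on the factor `f_t`. -/
noncomputable def Bd (I J t : ℕ) (π : ℕ → ℝ) (lam : ℝ) (f : ℕ → ℝ) (i : ℕ) : ℝ :=
  ∑ k ∈ Icc (I - t) I, betaCL J f (I - k) * π k * lam ^ Nat.dist i k

/-- Coefficient of `x⁻¹` in `β_{I-i}(f[t := x])`. -/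
noncomputable def Ec (I J t : ℕ) (f : ℕ → ℝ) (i : ℕ) : ℝ :=
  if I - t ≤ i then f t * betaCL J f (I - i) else 0

/-- Constant part of `β_{I-i}(f[t := x])`. -/
noncomputable def Ec' (I J t : ℕ) (f : ℕ → ℝ) (i : ℕ) : ℝ :=
  if I - t ≤ i then 0 else betaCL J f (I - i)

/-- Derivative of the `i`-th summand of the total GCC predictor in `f_t`. -/
noncomputable def dterm (I J t : ℕ) (C π : ℕ → ℝ) (lam : ℝ) (f : ℕ → ℝ) (i : ℕ) : ℝ :=
  (-(Ec I J t f i * -(f t ^ 2)⁻¹) *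
      (Nn I C lam i /
        ((Sd I J π lam f i - Bd I J t π lam f i) + (f t * Bd I J t π lam f i) * (f t)⁻¹))
    + (1 - (Ec I J t f i * (f t)⁻¹ + Ec' I J t f i)) *
      ((0 * ((Sd I J π lam f i - Bd I J t π lam f i) + (f t * Bd I J t π lam f i) * (f t)⁻¹)
          - Nn I C lam i * (f t * Bd I J t π lam f i * -(f t ^ 2)⁻¹)) /
        ((Sd I J π lam f i - Bd I J t π lam f i) + (f t * Bd I J t π lam f i) * (f t)⁻¹) ^ 2))
    * π i

lemma betaCL_pos (J : ℕ) (f : ℕ → ℝ) (hf : ∀ k < J, 0 < f k) (j : ℕ) :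
    0 < betaCL J f j := by
  unfold betaCL
  exact Finset.prod_pos fun k hk => inv_pos.2 (hf k (mem_Ico.1 hk).2)

lemma betaCL_update (J : ℕ) (f : ℕ → ℝ) (hf : ∀ k < J, 0 < f k)
    (t : ℕ) (ht : t < J) (x : ℝ) (j : ℕ) :
    betaCL J (Function.update f t x) j
      = if j ≤ t then x⁻¹ * (f t * betaCL J f j) else betaCL J f j := by
  unfold betaCL
  by_cases h : j ≤ t
  · have htm : t ∈ Ico j J := mem_Ico.2 ⟨h, ht⟩
    have hft : f t ≠ 0 := (hf t ht).ne'
    rw [if_pos h, ← Finset.mul_prod_erase _ _ htm,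
      ← Finset.mul_prod_erase _ (fun k => (f k)⁻¹) htm, Function.update_self]
    have herase : ∏ k ∈ (Ico j J).erase t, (Function.update f t x k)⁻¹
        = ∏ k ∈ (Ico j J).erase t, (f k)⁻¹ :=
      Finset.prod_congr rfl fun k hk => by
        rw [Function.update_of_ne (Finset.ne_of_mem_erase hk)]
    rw [herase, mul_inv_cancel_left₀ hft]
  · rw [if_neg h]
    refine Finset.prod_congr rfl fun k hk => ?_
    have hk' : k ≠ t := by
      have := (mem_Ico.1 hk).1; omega
    rw [Function.update_of_ne hk']

/-- error-propagation theorem: the total GCC predictor F is partially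
differentiable in each chain-ladder factor f_t, and f_t · ∂F/∂f_t equals the stated
expression; dividing by F(f) gives the logarithmic sensitivity q_t(λ). -/
theorem gcc_error_propagation_sensitivity
    (I J : ℕ) (hIJ : I = J + 1)
    (lam : ℝ) (hlam : lam ∈ Set.Icc (0 : ℝ) 1)
    (C π : ℕ → ℝ)
    (hC : ∀ i ∈ Icc 1 I, 0 < C i) (hπ : ∀ i ∈ Icc 1 I, 0 < π i)
    (f : ℕ → ℝ) (hf : ∀ k < J, 0 < f k)
    (t : ℕ) (ht : t < J) :
    ∃ D : ℝ,
      HasDerivAt (fun x => totalGCC I J C π lam (Function.update f t x)) D (f t) ∧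
      f t * D
        = ∑ i ∈ Icc (I - t) I, betaCL J f (I - i) * kappaGCCf I J C π lam f i * π i
          + ∑ i ∈ Icc 1 I,
              (1 - betaCL J f (I - i)) * kappaGCCf I J C π lam f i * π i *
                ((∑ k ∈ Icc (I - t) I, betaCL J f (I - k) * π k * lam ^ Nat.dist i k) /
                  (∑ k ∈ Icc 1 I, betaCL J f (I - k) * π k * lam ^ Nat.dist i k)) := by
  obtain ⟨hlam0, hlam1⟩ := hlam
  have hc : 0 < f t := hf t ht
  have hcne : f t ≠ 0 := hc.ne'
  have hβpos : ∀ j, 0 < betaCL J f j := betaCL_pos J f hf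
  -- positivity of the denominator Sd
  have hSpos : ∀ i ∈ Icc 1 I, 0 < Sd I J π lam f i := by
    intro i hi
    unfold Sd
    refine Finset.sum_pos' (fun k hk => ?_) ⟨i, hi, ?_⟩
    · exact mul_nonneg (mul_nonneg (hβpos _).le (hπ k hk).le) (pow_nonneg hlam0 _)
    · rw [Nat.dist_self, pow_zero, mul_one]
      exact mul_pos (hβpos _) (hπ i hi)
  -- filter description of Icc (I-t) I inside Icc 1 I
  have hfilter : (Icc 1 I).filter (fun k => I - t ≤ k) = Icc (I - t) I := by
    ext k
    simp only [mem_filter, mem_Icc]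
    omega
  -- the updated denominator as an affine function of x⁻¹
  have hSupd : ∀ (x : ℝ) (i : ℕ),
      (∑ k ∈ Icc 1 I, betaCL J (Function.update f t x) (I - k) * π k * lam ^ Nat.dist i k)
        = (Sd I J π lam f i - Bd I J t π lam f i) + (f t * Bd I J t π lam f i) * x⁻¹ := by
    intro x i
    have h1 : ∀ k, betaCL J (Function.update f t x) (I - k)
        = if I - t ≤ k then x⁻¹ * (f t * betaCL J f (I - k)) else betaCL J f (I - k) := by
      intro k
      rw [betaCL_update J f hf t ht]
      by_cases h : I - t ≤ k
      · rw [if_pos (by omega : I - k ≤ t), if_pos h]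
      · rw [if_neg (by omega : ¬ I - k ≤ t), if_neg h]
    have h2 : (∑ k ∈ Icc 1 I, betaCL J (Function.update f t x) (I - k) * π k * lam ^ Nat.dist i k)
        = ∑ k ∈ Icc 1 I, (if I - t ≤ k
            then (x⁻¹ * f t) * (betaCL J f (I - k) * π k * lam ^ Nat.dist i k)
            else betaCL J f (I - k) * π k * lam ^ Nat.dist i k) := by
      refine Finset.sum_congr rfl fun k _ => ?_
      rw [h1 k]
      split_ifs <;> ring
    rw [h2, Finset.sum_ite, ← Finset.mul_sum, hfilter]
    have h3 : (∑ k ∈ (Icc 1 I).filter (fun k => ¬ I - t ≤ k),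
        betaCL J f (I - k) * π k * lam ^ Nat.dist i k)
        = Sd I J π lam f i - Bd I J t π lam f i := by
      have h4 := Finset.sum_filter_add_sum_filter_not (Icc 1 I) (fun k => I - t ≤ k)
        (fun k => betaCL J f (I - k) * π k * lam ^ Nat.dist i k)
      rw [hfilter] at h4
      have : Bd I J t π lam f i + (∑ k ∈ (Icc 1 I).filter (fun k => ¬ I - t ≤ k),
          betaCL J f (I - k) * π k * lam ^ Nat.dist i k) = Sd I J π lam f i := h4
      linarith
    rw [h3]
    unfold Bd
    ring
  -- the updated beta as an affine function of x⁻¹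
  have hbetaupd : ∀ (x : ℝ) (i : ℕ),
      betaCL J (Function.update f t x) (I - i) = Ec I J t f i * x⁻¹ + Ec' I J t f i := by
    intro x i
    rw [betaCL_update J f hf t ht]
    unfold Ec Ec'
    by_cases h : I - t ≤ i
    · rw [if_pos (by omega : I - i ≤ t), if_pos h, if_pos h]
      ring
    · rw [if_neg (by omega : ¬ I - i ≤ t), if_neg h, if_neg h]
      ring
  -- the updated total predictor as an explicit function of x
  have hfun : (fun x => totalGCC I J C π lam (Function.update f t x))
      = fun x => ∑ i ∈ Icc 1 I,
          (C i + (1 - (Ec I J t f i * x⁻¹ + Ec' I J t f i)) *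
            (Nn I C lam i /
              ((Sd I J π lam f i - Bd I J t π lam f i) + (f t * Bd I J t π lam f i) * x⁻¹)) *
            π i) := by
    funext x
    unfold totalGCC kappaGCCf
    refine Finset.sum_congr rfl fun i _ => ?_
    rw [hbetaupd x i, hSupd x i]
    rfl
  -- values of Ec, Ec' and the denominator at the point f t
  have hEcval : ∀ i, Ec I J t f i * (f t)⁻¹ + Ec' I J t f i = betaCL J f (I - i) := by
    intro i
    unfold Ec Ec'
    split_ifs
    · field_simp
      simp
    · ring
  have hdenval : ∀ i, (Sd I J π lam f i - Bd I J t π lam f i)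
      + (f t * Bd I J t π lam f i) * (f t)⁻¹ = Sd I J π lam f i := by
    intro i
    field_simp
    ring
  -- termwise differentiability
  have hder : ∀ i ∈ Icc 1 I,
      HasDerivAt (fun x => C i + (1 - (Ec I J t f i * x⁻¹ + Ec' I J t f i)) *
          (Nn I C lam i /
            ((Sd I J π lam f i - Bd I J t π lam f i) + (f t * Bd I J t π lam f i) * x⁻¹)) *
          π i)
        (dterm I J t C π lam f i) (f t) := by
    intro i hi
    have hinv : HasDerivAt (fun x : ℝ => x⁻¹) (-(f t ^ 2)⁻¹) (f t) := hasDerivAt_inv hcne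
    have he : HasDerivAt (fun x : ℝ => Ec I J t f i * x⁻¹ + Ec' I J t f i)
        (Ec I J t f i * -(f t ^ 2)⁻¹) (f t) :=
      (hinv.const_mul (Ec I J t f i)).add_const (Ec' I J t f i)
    have h1e : HasDerivAt (fun x : ℝ => 1 - (Ec I J t f i * x⁻¹ + Ec' I J t f i))
        (-(Ec I J t f i * -(f t ^ 2)⁻¹)) (f t) := he.const_sub 1
    have hden : HasDerivAt (fun x : ℝ =>
        (Sd I J π lam f i - Bd I J t π lam f i) + (f t * Bd I J t π lam f i) * x⁻¹)
        (f t * Bd I J t π lam f i * -(f t ^ 2)⁻¹) (f t) :=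
      (hinv.const_mul (f t * Bd I J t π lam f i)).const_add
        (Sd I J π lam f i - Bd I J t π lam f i)
    have hdne : (Sd I J π lam f i - Bd I J t π lam f i)
        + (f t * Bd I J t π lam f i) * (f t)⁻¹ ≠ 0 := by
      rw [hdenval i]
      exact (hSpos i hi).ne'
    have hquot := (hasDerivAt_const (f t) (Nn I C lam i)).div hden hdne
    exact ((h1e.mul hquot).mul_const (π i)).const_add (C i)
  refine ⟨∑ i ∈ Icc 1 I, dterm I J t C π lam f i, ?_, ?_⟩
  · rw [hfun]
    exact HasDerivAt.fun_sum hder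
  · -- the algebraic identity
    have hfirst : (∑ i ∈ Icc (I - t) I, betaCL J f (I - i) * kappaGCCf I J C π lam f i * π i)
        = ∑ i ∈ Icc 1 I, (if I - t ≤ i
            then betaCL J f (I - i) * kappaGCCf I J C π lam f i * π i else 0) := by
      rw [← hfilter, Finset.sum_filter]
    rw [hfirst, Finset.mul_sum, ← Finset.sum_add_distrib]
    refine Finset.sum_congr rfl fun i hi => ?_
    have hS : Sd I J π lam f i ≠ 0 := (hSpos i hi).ne'
    have hkappa : kappaGCCf I J C π lam f i = Nn I C lam i / Sd I J π lam f i := rfl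
    have hBdsum : (∑ k ∈ Icc (I - t) I, betaCL J f (I - k) * π k * lam ^ Nat.dist i k)
        = Bd I J t π lam f i := rfl
    have hSdsum : (∑ k ∈ Icc 1 I, betaCL J f (I - k) * π k * lam ^ Nat.dist i k)
        = Sd I J π lam f i := rfl
    rw [hkappa, hBdsum, hSdsum]
    unfold dterm Ec Ec'
    rw [hdenval i]
    by_cases h : I - t ≤ i
    · rw [if_pos h, if_pos h, if_pos h]
      field_simp
      ring
    · rw [if_neg h, if_neg h, if_neg h]
      field_simp
      ring
end

section
/- Let I = J+1, let C_{i,I−i} > 0, π_i > 0, and β_0,…,β_J > 0 with β_J = 1, and for λ ∈ (0,1] and t ∈ {0,…,J−1} define q_t(λ) = [ Σ_{i=I−t}^{I} β_{I−i} κ̂_i^GCC(λ) π_i + Σ_{i=1}^{I} (1 − β_{I−i}) κ̂_i^GCC(λ) π_i · ( Σ_{k=I−t}^{I} β_{I−k} π_k λ^{|i−k|} / Σ_{k=1}^{I} β_{I−k} π_k λ^{|i−k|} ) ] / Σ_{i=1}^{I} Ĉ^GCC_{i,J}(λ). Then as λ → 0 from the right, q_t(λ) converges and lim_{λ↓0}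 q_t(λ) = Σ_{i=I−t}^{I} Ĉ^CL_{i,J} / Σ_{i=1}^{I} Ĉ^CL_{i,J}, where Ĉ^CL_{i,J} = C_{i,I−i}/β_{I−i}. -/
open Finset

/-- Generalized Cape Cod claims-ratio estimator κ̂ᵢ^GCC(λ); here `C i` denotes the
diagonal observation C_{i,I-i}. -/
noncomputable def kappaGCC (I : ℕ) (C π β : ℕ → ℝ) (lam : ℝ) (i : ℕ) : ℝ :=
  ∑ l ∈ Icc 1 I,
    (β (I - l) * π l * lam ^ Nat.dist i l /
      ∑ k ∈ Icc 1 I, β (I - k) * π k * lam ^ Nat.dist i k) *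
      (C l / (β (I - l) * π l))

/-- Generalized Cape Cod ultimate-claim predictor Ĉᵢ^GCC(λ). -/
noncomputable def predGCC (I : ℕ) (C π β : ℕ → ℝ) (lam : ℝ) (i : ℕ) : ℝ :=
  C i + (1 - β (I - i)) * kappaGCC I C π β lam i * π i

/-- The GCC logarithmic sensitivity q_t(λ) from the error-propagation theorem. -/
noncomputable def qGCC (I : ℕ) (C π β : ℕ → ℝ) (t : ℕ) (lam : ℝ) : ℝ :=
  (∑ i ∈ Icc (I - t) I, β (I - i) * kappaGCC I C π β lam i * π i
    + ∑ i ∈ Icc 1 I,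
        (1 - β (I - i)) * kappaGCC I C π β lam i * π i *
          ((∑ k ∈ Icc (I - t) I, β (I - k) * π k * lam ^ Nat.dist i k) /
            (∑ k ∈ Icc 1 I, β (I - k) * π k * lam ^ Nat.dist i k))) /
    ∑ i ∈ Icc 1 I, predGCC I C π β lam i

/-- 0^dist i k as an if. -/
lemma zero_pow_nat_dist (i k : ℕ) : (0 : ℝ) ^ Nat.dist i k = if i = k then 1 else 0 := by
  by_cases h : i = k
  · simp [h, Nat.dist_self]
  · have hd : Nat.dist i k ≠ 0 := fun hz => h (Nat.eq_of_dist_eq_zero hz)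
    simp [h, zero_pow hd]

lemma sum_at_zero (I : ℕ) (π β : ℕ → ℝ) (i : ℕ) (s : Finset ℕ) :
    ∑ k ∈ s, β (I - k) * π k * (0 : ℝ) ^ Nat.dist i k
      = if i ∈ s then β (I - i) * π i else 0 := by
  have h : ∀ k ∈ s, β (I - k) * π k * (0 : ℝ) ^ Nat.dist i k
      = if i = k then β (I - k) * π k else 0 := by
    intro k _
    rw [zero_pow_nat_dist]
    split <;> simp
  rw [Finset.sum_congr rfl h, Finset.sum_ite_eq]

lemma cont_sum (I : ℕ) (π β : ℕ → ℝ) (i : ℕ) (s : Finset ℕ) :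
    Continuous fun lam : ℝ => ∑ k ∈ s, β (I - k) * π k * lam ^ Nat.dist i k := by
  apply continuous_finset_sum
  intro k _
  continuity

lemma kappa_at_zero (I : ℕ) (C π β : ℕ → ℝ)
    (hβπ : ∀ l ∈ Icc 1 I, β (I - l) * π l ≠ 0) (i : ℕ) (hi : i ∈ Icc 1 I) :
    kappaGCC I C π β 0 i = C i / (β (I - i) * π i) := by
  unfold kappaGCC
  rw [sum_at_zero I π β i, if_pos hi]
  rw [Finset.sum_eq_single_of_mem i hi]
  · rw [Nat.dist_self, pow_zero, mul_one, div_self (hβπ i hi), one_mul]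
  · intro l _ hne
    rw [zero_pow_nat_dist, if_neg (fun h => hne h.symm), mul_zero, zero_div, zero_mul]

lemma kappa_contAt (I : ℕ) (C π β : ℕ → ℝ)
    (hβπ : ∀ l ∈ Icc 1 I, β (I - l) * π l ≠ 0) (i : ℕ) (hi : i ∈ Icc 1 I) :
    ContinuousAt (fun lam => kappaGCC I C π β lam i) 0 := by
  have hD : (∑ k ∈ Icc 1 I, β (I - k) * π k * (0 : ℝ) ^ Nat.dist i k) ≠ 0 := by
    rw [sum_at_zero I π β i, if_pos hi]; exact hβπ i hi
  unfold kappaGCC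
  apply tendsto_finset_sum
  intro l _
  exact ((((continuous_const.mul (continuous_pow _)).continuousAt).div
    ((cont_sum I π β i (Icc 1 I)).continuousAt) hD).mul continuousAt_const)

/-- as λ ↓ 0 the GCC sensitivity q_t(λ) converges to the chain-ladder
sensitivity Σ_{i=I-t}^I Ĉ^CL_{i,J} / Σ_{i=1}^I Ĉ^CL_{i,J}, with Ĉ^CL_{i,J} = C_{i,I-i}/β_{I-i}. -/
theorem gcc_sensitivity_limit_lambda_zero
    (I J : ℕ) (hIJ : I = J + 1)
    (C π β : ℕ → ℝ)
    (hC : ∀ i ∈ Icc 1 I, 0 < C i)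
    (hπ : ∀ i ∈ Icc 1 I, 0 < π i)
    (hβ : ∀ j ≤ J, 0 < β j) (hβJ : β J = 1)
    (t : ℕ) (ht : t < J) :
    Filter.Tendsto (qGCC I C π β t) (nhdsWithin 0 (Set.Ioi 0))
      (nhds ((∑ i ∈ Icc (I - t) I, C i / β (I - i)) / (∑ i ∈ Icc 1 I, C i / β (I - i)))) := by
  have hβ' : ∀ i ∈ Icc 1 I, 0 < β (I - i) := by
    intro i hi
    rw [mem_Icc] at hi
    exact hβ _ (by omega)
  have hβπ : ∀ l ∈ Icc 1 I, β (I - l) * π l ≠ 0 := fun l hl =>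
    (mul_pos (hβ' l hl) (hπ l hl)).ne'
  have hsub : Icc (I - t) I ⊆ Icc 1 I := Finset.Icc_subset_Icc_left (by omega)
  -- value of predGCC at 0
  have hpred0 : ∀ i ∈ Icc 1 I, predGCC I C π β 0 i = C i / β (I - i) := by
    intro i hi
    unfold predGCC
    rw [kappa_at_zero I C π β hβπ i hi]
    have h1 : β (I - i) ≠ 0 := (hβ' i hi).ne'
    have h2 : π i ≠ 0 := (hπ i hi).ne'
    field_simp
    ring
  -- denominator at 0 is positive
  have hden0 : 0 < ∑ i ∈ Icc 1 I, predGCC I C π β 0 i := by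
    apply Finset.sum_pos
    · intro i hi
      rw [hpred0 i hi]
      exact div_pos (hC i hi) (hβ' i hi)
    · exact ⟨1, by rw [mem_Icc]; omega⟩
  -- value of qGCC at 0
  have hq0 : qGCC I C π β t 0
      = (∑ i ∈ Icc (I - t) I, C i / β (I - i)) / (∑ i ∈ Icc 1 I, C i / β (I - i)) := by
    unfold qGCC
    have hnum1 : ∑ i ∈ Icc (I - t) I, β (I - i) * kappaGCC I C π β 0 i * π i
        = ∑ i ∈ Icc (I - t) I, C i := by
      apply Finset.sum_congr rfl
      intro i hi
      rw [kappa_at_zero I C π β hβπ i (hsub hi)]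
      have h1 : β (I - i) ≠ 0 := (hβ' i (hsub hi)).ne'
      have h2 : π i ≠ 0 := (hπ i (hsub hi)).ne'
      field_simp
    have hnum2 : ∑ i ∈ Icc 1 I,
          (1 - β (I - i)) * kappaGCC I C π β 0 i * π i *
            ((∑ k ∈ Icc (I - t) I, β (I - k) * π k * (0 : ℝ) ^ Nat.dist i k) /
              (∑ k ∈ Icc 1 I, β (I - k) * π k * (0 : ℝ) ^ Nat.dist i k))
        = ∑ i ∈ Icc (I - t) I, (1 - β (I - i)) * (C i / β (I - i)) := by
      have h : ∀ i ∈ Icc 1 I,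
          (1 - β (I - i)) * kappaGCC I C π β 0 i * π i *
            ((∑ k ∈ Icc (I - t) I, β (I - k) * π k * (0 : ℝ) ^ Nat.dist i k) /
              (∑ k ∈ Icc 1 I, β (I - k) * π k * (0 : ℝ) ^ Nat.dist i k))
          = if i ∈ Icc (I - t) I then (1 - β (I - i)) * (C i / β (I - i)) else 0 := by
        intro i hi
        rw [kappa_at_zero I C π β hβπ i hi, sum_at_zero I π β i, sum_at_zero I π β i,
          if_pos hi]
        split
        · have h1 : β (I - i) ≠ 0 := (hβ' i hi).ne'
          have h2 : π i ≠ 0 := (hπ i hi).ne'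
          field_simp
        · simp
      rw [Finset.sum_congr rfl h, Finset.sum_ite_mem,
        Finset.inter_eq_right.mpr hsub]
    rw [hnum1, hnum2, Finset.sum_congr rfl hpred0, ← Finset.sum_add_distrib]
    congr 1
    apply Finset.sum_congr rfl
    intro i hi
    have h1 : β (I - i) ≠ 0 := (hβ' i (hsub hi)).ne'
    field_simp
    ring
  -- continuity at 0
  have hcont : ContinuousAt (qGCC I C π β t) 0 := by
    unfold qGCC
    apply ContinuousAt.div
    · apply ContinuousAt.add
      · apply tendsto_finset_sum
        intro i hi
        exact (continuousAt_const.mul (kappa_contAt I C π β hβπ i (hsub hi))).mul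
          continuousAt_const
      · apply tendsto_finset_sum
        intro i hi
        have hD : (∑ k ∈ Icc 1 I, β (I - k) * π k * (0 : ℝ) ^ Nat.dist i k) ≠ 0 := by
          rw [sum_at_zero I π β i, if_pos hi]; exact hβπ i hi
        exact ((continuousAt_const.mul (kappa_contAt I C π β hβπ i hi)).mul
          continuousAt_const).mul
          (((cont_sum I π β i (Icc (I - t) I)).continuousAt).div
            ((cont_sum I π β i (Icc 1 I)).continuousAt) hD)
    · apply tendsto_finset_sum
      intro i hi
      unfold predGCC
      exact continuousAt_const.add
        ((continuousAt_const.mul (kappa_contAt I C π β hβπ i hi)).mul continuousAt_const)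
    · exact hden0.ne'
  have := hcont.continuousWithinAt (s := Set.Ioi (0 : ℝ))
  rw [ContinuousWithinAt, hq0] at this
  exact this
end

section
/- Let I = J+1, let u_1,…,u_I be real numbers and s_0,…,s_{J−1} be real numbers. Then Σ_{j=0}^{J−1} s_j ( Σ_{i=I−j}^{I} u_i )² = Σ_{i=I−J+1}^{I} u_i² ( Σ_{j=I−i}^{J−1} s_j ) + 2 Σ_{I−J+1 ≤ i < k ≤ I} u_i u_k ( Σ_{j=I−i}^{J−1} s_j ). In particular, taking u_i = Ĉ^CL_{i,J} and s_j = (σ̂_j²/f̂_j²)/Σ_{ℓ=1}^{I−j−1} C_{ℓ,j}, the error-propagation estimate (Σ_{i=1}^I Ĉ^CL_{i,J})² Σ_{j=0}^{J−1} q_j(0)² s_j, with q_j(0) = Σ_{i=I−j}^{I} Ĉ^CL_{i,J} / Σ_{i=1}^{I} Ĉ^CL_{i,J}, coincides with Mack's chain-ladder parameter estimation error estimate Σ_{i=I−J+1}^{I} (Ĉ^CL_{i,J})² Σ_{j=I−i}^{J−1} s_j + 2 Σ_{I−J+1 ≤ i < k ≤ I} Ĉ^CL_{i,J} Ĉ^CL_{k,J}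 Σ_{j=I−i}^{J−1} s_j. -/
open Finset

lemma aux_swap_lt (A : Finset ℕ) (u : ℕ → ℝ) :
    ∑ i ∈ A, ∑ k ∈ A.filter (fun k => k < i), u i * u k
      = ∑ i ∈ A, ∑ k ∈ A.filter (fun k => i < k), u i * u k := by
  rw [Finset.sum_comm' (s' := fun k => A.filter (fun i => k < i)) (t' := A)
    (by intro i k; simp only [Finset.mem_filter]; tauto)]
  exact Finset.sum_congr rfl fun i _ => Finset.sum_congr rfl fun k _ => mul_comm _ _

lemma aux_sq_sum (A : Finset ℕ) (u : ℕ → ℝ) :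
    (∑ i ∈ A, u i) ^ 2
      = ∑ i ∈ A, u i ^ 2 + 2 * ∑ i ∈ A, ∑ k ∈ A.filter (fun k => i < k), u i * u k := by
  classical
  rw [sq, Finset.sum_mul_sum]
  have h3 : ∀ i ∈ A, ∑ k ∈ A, u i * u k
      = (u i ^ 2 + ∑ k ∈ A.filter (fun k => k < i), u i * u k)
        + ∑ k ∈ A.filter (fun k => i < k), u i * u k := by
    intro i hi
    rw [← Finset.sum_filter_add_sum_filter_not A (fun k => i < k), add_comm]
    congr 1
    have hset : A.filter (fun k => ¬ i < k) = insert i (A.filter (fun k => k < i)) := by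
      ext k
      simp only [Finset.mem_filter, Finset.mem_insert]
      constructor
      · rintro ⟨hk, hle⟩
        rcases Nat.lt_or_ge k i with h | h
        · exact Or.inr ⟨hk, h⟩
        · exact Or.inl (by omega)
      · rintro (rfl | ⟨hk, hlt⟩)
        · exact ⟨hi, by omega⟩
        · exact ⟨hk, by omega⟩
    rw [hset, Finset.sum_insert (by simp)]
    ring_nf
  rw [Finset.sum_congr rfl h3, Finset.sum_add_distrib, Finset.sum_add_distrib, aux_swap_lt]
  ring

lemma aux_filter_Icc (a b i : ℕ) (hi : a ≤ i) :
    (Icc a b).filter (fun k => i < k) = Icc (i + 1) b := by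
  ext k
  simp only [Finset.mem_filter, Finset.mem_Icc]
  omega

/-- the algebraic identity behind the equality of the error-propagation
estimate with Mack's chain-ladder parameter estimation error estimate.  In particular,
with u_i = Ĉ^CL_{i,J}, s_j = (σ̂_j²/f̂_j²)/Σ_ℓ C_{ℓ,j} and q_j(0) = Σ_{i=I-j}^I u_i / Σ_{i=1}^I u_i,
the error-propagation estimate coincides with Mack's estimate. -/
theorem error_propagation_equals_mack
    (I J : ℕ) (hIJ : I = J + 1) (u s : ℕ → ℝ) :
    (∑ j ∈ range J, s j * (∑ i ∈ Icc (I - j) I, u i) ^ 2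
      = ∑ i ∈ Icc (I - J + 1) I, u i ^ 2 * (∑ j ∈ Ico (I - i) J, s j)
        + 2 * ∑ i ∈ Icc (I - J + 1) I, ∑ k ∈ Icc (i + 1) I,
            u i * u k * (∑ j ∈ Ico (I - i) J, s j))
    ∧ ((∑ i ∈ Icc 1 I, u i) ≠ 0 →
        (∑ i ∈ Icc 1 I, u i) ^ 2 *
            ∑ j ∈ range J,
              ((∑ i ∈ Icc (I - j) I, u i) / (∑ i ∈ Icc 1 I, u i)) ^ 2 * s j
          = ∑ i ∈ Icc (I - J + 1) I, u i ^ 2 * (∑ j ∈ Ico (I - i) J, s j)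
            + 2 * ∑ i ∈ Icc (I - J + 1) I, ∑ k ∈ Icc (i + 1) I,
                u i * u k * (∑ j ∈ Ico (I - i) J, s j)) := by
  have main : ∑ j ∈ range J, s j * (∑ i ∈ Icc (I - j) I, u i) ^ 2
      = ∑ i ∈ Icc (I - J + 1) I, u i ^ 2 * (∑ j ∈ Ico (I - i) J, s j)
        + 2 * ∑ i ∈ Icc (I - J + 1) I, ∑ k ∈ Icc (i + 1) I,
            u i * u k * (∑ j ∈ Ico (I - i) J, s j) := by
    have expand : ∀ j ∈ range J, s j * (∑ i ∈ Icc (I - j) I, u i) ^ 2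
        = (∑ i ∈ Icc (I - j) I, u i ^ 2 * s j)
          + 2 * ∑ i ∈ Icc (I - j) I, ∑ k ∈ Icc (i + 1) I, u i * u k * s j := by
      intro j hj
      simp only [Finset.mem_range] at hj
      rw [aux_sq_sum]
      have hfilter : ∀ i ∈ Icc (I - j) I,
          ∑ k ∈ (Icc (I - j) I).filter (fun k => i < k), u i * u k
            = ∑ k ∈ Icc (i + 1) I, u i * u k := by
        intro i hi
        simp only [Finset.mem_Icc] at hi
        rw [aux_filter_Icc _ _ _ hi.1]
      rw [Finset.sum_congr rfl hfilter]
      rw [mul_add, mul_comm (s j), Finset.sum_mul, mul_comm (s j), mul_assoc,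
        Finset.sum_mul]
      congr 1
      congr 1
      exact Finset.sum_congr rfl fun i _ => by rw [Finset.sum_mul]
    rw [Finset.sum_congr rfl expand, Finset.sum_add_distrib, ← Finset.mul_sum]
    have hswap : ∀ (f : ℕ → ℕ → ℝ),
        ∑ j ∈ range J, ∑ i ∈ Icc (I - j) I, f j i
          = ∑ i ∈ Icc (I - J + 1) I, ∑ j ∈ Ico (I - i) J, f j i := by
      intro f
      exact Finset.sum_comm' (by
        intro j i
        simp only [Finset.mem_range, Finset.mem_Icc, Finset.mem_Ico]
        omega)
    rw [hswap (fun j i => u i ^ 2 * s j), hswap (fun j i => ∑ k ∈ Icc (i + 1) I, u i * u k * s j)]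
    congr 1
    · exact Finset.sum_congr rfl fun i _ => by rw [← Finset.mul_sum]
    · congr 1
      refine Finset.sum_congr rfl fun i _ => ?_
      rw [Finset.sum_comm]
      exact Finset.sum_congr rfl fun k _ => by rw [← Finset.mul_sum]
  refine ⟨main, fun hne => ?_⟩
  rw [← main, Finset.mul_sum]
  refine Finset.sum_congr rfl fun j _ => ?_
  field_simp
end
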